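/- Let C = e₁e₂...eₙ be a red k-uniform loose cycle with n odd, n ≥ 3, in a 2-colored complete k-uniform hypergraph with at least (k-1)n vertices, k ≥ 3. Define fᵢ by shifting: fᵢ = (e_{2i-1} \ {last vertex of e_{2i-1}}) ∪ {last vertex of e_{2i}} for 1 ≤ i ≤ (n+1)/2, and fᵢ = (e_{2i-n-1} \ {last vertex of e_{2i-n-1}}) ∪ {last vertex of e_{2i-n}} for (n+3)/2 ≤ i ≤ n. Then f₁f₂...fₙ is a loose cycle C^k_n, and if there is no red copy of C^k_{n-1}, all fᵢ are blue, yielding a blue C^k_n. -/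

import Mathlib

open Finset

/-- Edge `i` (0-indexed) of the `k`-uniform loose cycle with `n` edges, under the embedding `f`
of its canonical vertex set `ZMod (n*(k-1))`. -/
def cycEdge (k n : ℕ) {V : Type} [DecidableEq V] (f : ZMod (n * (k - 1)) → V) (i : ℕ) :
    Finset V :=
  (Finset.range k).image fun t => f ((i * (k - 1) + t : ℕ) : ZMod (n * (k - 1)))

/-- `f` embeds a loose cycle `C^k_n` all of whose edges satisfy `P`. -/
def IsLooseCycle (k n : ℕ) {V : Type} [DecidableEq V] (P : Finset V → Prop)
    (f : ZMod (n * (k - 1)) → V) : Prop :=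
  Function.Injective f ∧ ∀ i < n, P (cycEdge k n f i)

/-- There is a copy of the loose cycle `C^k_n` all of whose edges satisfy `P`. -/
def HasLooseCycle (k n : ℕ) {V : Type} [DecidableEq V] (P : Finset V → Prop) : Prop :=
  ∃ f, IsLooseCycle k n P f

/-- Edge `i` (0-indexed) of a loose path under the vertex assignment `f`. -/
def pathEdge (k : ℕ) {V : Type} [DecidableEq V] (f : ℕ → V) (i : ℕ) : Finset V :=
  (Finset.range k).image fun t => f (i * (k - 1) + t)

/-- There is a copy of the loose path `P^k_n` all of whose edges satisfy `P`. -/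
def HasLoosePath (k n : ℕ) {V : Type} [DecidableEq V] (P : Finset V → Prop) : Prop :=
  ∃ f : ℕ → V, Set.InjOn f (Set.Iic (n * (k - 1))) ∧ ∀ i < n, P (pathEdge k f i)

/-- Every red/blue colouring of `K^k_N` contains a red `C^k_n` or a blue `C^k_m`. -/
def cycCycArrow (k n m N : ℕ) : Prop :=
  ∀ c : Finset (Fin N) → Bool,
    HasLooseCycle k n (fun e => c e = true) ∨ HasLooseCycle k m (fun e => c e = false)

/-- Every red/blue colouring of `K^k_N` contains a red `P^k_n` or a blue `P^k_m`. -/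
def pathPathArrow (k n m N : ℕ) : Prop :=
  ∀ c : Finset (Fin N) → Bool,
    HasLoosePath k n (fun e => c e = true) ∨ HasLoosePath k m (fun e => c e = false)

/-- Every red/blue colouring of `K^k_N` contains a red `P^k_n` or a blue `C^k_m`. -/
def pathCycArrow (k n m N : ℕ) : Prop :=
  ∀ c : Finset (Fin N) → Bool,
    HasLoosePath k n (fun e => c e = true) ∨ HasLooseCycle k m (fun e => c e = false)

/-- Every red/blue colouring of `K^k_N` contains a red `C^k_n` or a blue `P^k_m`. -/
def cycPathArrow (k n m N : ℕ) : Prop :=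
  ∀ c : Finset (Fin N) → Bool,
    HasLooseCycle k n (fun e => c e = true) ∨ HasLoosePath k m (fun e => c e = false)

/-- `r = R(C^k_n, C^k_m)`. -/
def cycCycRamsey (k n m r : ℕ) : Prop := IsLeast {N | cycCycArrow k n m N} r

/-- `r = R(P^k_n, P^k_m)`. -/
def pathPathRamsey (k n m r : ℕ) : Prop := IsLeast {N | pathPathArrow k n m N} r

/-- `r = R(P^k_n, C^k_m)`. -/
def pathCycRamsey (k n m r : ℕ) : Prop := IsLeast {N | pathCycArrow k n m N} r

/-- `r = R(C^k_n, P^k_m)`. -/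
def cycPathRamsey (k n m r : ℕ) : Prop := IsLeast {N | cycPathArrow k n m N} r

/-- The shifted edge `f_{i+1} = (e_{2i+1} \ {last of e_{2i+1}}) ∪ {last of e_{2i+2}}`
(1-indexed), i.e. 0-indexed: `(e_{2i} \ {last of e_{2i}}) ∪ {last of e_{2i+1}}`, indices
taken cyclically. -/
def shiftedEdge (k n : ℕ) {V : Type} [DecidableEq V] (f : ZMod (n * (k - 1)) → V)
    (i : ℕ) : Finset V :=
  insert (f (((2 * i + 2) * (k - 1) : ℕ) : ZMod (n * (k - 1))))
    ((cycEdge k n f (2 * i)).erase (f (((2 * i + 1) * (k - 1) : ℕ) : ZMod (n * (k - 1)))))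

lemma ndec (m d q r : ℕ) : q*d + r = (q/m)*(m*d) + ((q%m)*d + r) := by
  conv_lhs => rw [← Nat.div_add_mod q m]
  ring

lemma slt {m d q r : ℕ} (hm : 0 < m) (hr : r < d) : (q%m)*d + r < m*d := by
  have h1 : q % m + 1 ≤ m := Nat.mod_lt _ hm
  calc (q%m)*d + r < (q%m)*d + d := by omega
    _ = (q%m+1)*d := by ring
    _ ≤ m*d := Nat.mul_le_mul_right _ h1

lemma mdec {m d : ℕ} (q r : ℕ) (hm : 0 < m) (hr : r < d) :
    (q*d + r) % (m*d) = (q%m)*d + r := by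
  rw [ndec m d q r, mul_comm (q/m) (m*d), Nat.mul_add_mod, Nat.mod_eq_of_lt (slt hm hr)]

lemma vmdec {m d : ℕ} (q r : ℕ) (hm : 0 < m) (hr : r < d) :
    ((q*d + r : ℕ) : ZMod (m*d)).val = (q%m)*d + r := by
  haveI : NeZero (m*d) := ⟨Nat.mul_ne_zero (by omega) (by omega)⟩
  rw [ZMod.val_natCast, mdec q r hm hr]

lemma vmdec0 {m d : ℕ} (q : ℕ) (hm : 0 < m) (hd : 0 < d) :
    ((q*d : ℕ) : ZMod (m*d)).val = (q%m)*d := by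
  simpa using vmdec q 0 hm hd

lemma cdec (m d q r : ℕ) :
    ((q*d + r : ℕ) : ZMod (m*d)) = (((q%m)*d + r : ℕ) : ZMod (m*d)) := by
  rw [ndec m d q r, Nat.cast_add, Nat.cast_mul, ZMod.natCast_self, mul_zero, zero_add]

lemma cdec0 (m d q : ℕ) :
    ((q*d : ℕ) : ZMod (m*d)) = (((q%m)*d : ℕ) : ZMod (m*d)) := by
  simpa using cdec m d q 0

lemma ddiv {d : ℕ} (Q r : ℕ) (hd : 0 < d) (hr : r < d) : (Q*d + r)/d = Q := by
  rw [add_comm, mul_comm, Nat.add_mul_div_left _ _ hd, Nat.div_eq_of_lt hr, zero_add]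

lemma dmod {d : ℕ} (Q r : ℕ) (hr : r < d) : (Q*d + r)%d = r := by
  rw [mul_comm Q d, Nat.mul_add_mod, Nat.mod_eq_of_lt hr]

lemma duniq {d A B r s : ℕ} (hd : 0 < d) (hr : r < d) (hs : s < d)
    (h : A*d + r = B*d + s) : A = B ∧ r = s := by
  constructor
  · have := congrArg (·/d) h
    simpa [ddiv A r hd hr, ddiv B s hd hs] using this
  · have := congrArg (·%d) h
    simpa [dmod A r hr, dmod B s hs] using this

def sig (n d : ℕ) : ZMod (n*d) → ZMod (n*d) := fun x =>
  ((2*(x.val/d)*d + x.val%d : ℕ) : ZMod (n*d))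

lemma sig_spec {n d : ℕ} (q r : ℕ) (hn : 0 < n) (hd : 0 < d) (hr : r < d) :
    sig n d ((q*d + r : ℕ) : ZMod (n*d)) = ((2*q*d + r : ℕ) : ZMod (n*d)) := by
  unfold sig
  rw [vmdec q r hn hr, ddiv _ _ hd hr, dmod _ _ hr, cdec n d (2*(q%n)) r,
    cdec n d (2*q) r, ((Nat.mod_modEq q n).mul_left 2 : (2*(q%n))%n = (2*q)%n)]

lemma sig_spec0 {n d : ℕ} (q : ℕ) (hn : 0 < n) (hd : 0 < d) :
    sig n d ((q*d : ℕ) : ZMod (n*d)) = ((2*q*d : ℕ) : ZMod (n*d)) := by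
  simpa using sig_spec q 0 hn hd hd

lemma sig_inj {n d : ℕ} (hn : 0 < n) (hd : 0 < d) (hodd : Odd n) :
    Function.Injective (sig n d) := by
  haveI : NeZero (n*d) := ⟨Nat.mul_ne_zero (by omega) (by omega)⟩
  intro x y hxy
  have hrx : x.val % d < d := Nat.mod_lt _ hd
  have hry : y.val % d < d := Nat.mod_lt _ hd
  have hxy' := congrArg ZMod.val hxy
  unfold sig at hxy'
  rw [vmdec _ _ hn hrx, vmdec _ _ hn hry] at hxy'
  obtain ⟨hq, hr⟩ := duniq hd hrx hry hxy'
  have hco : Nat.gcd n 2 = 1 := Nat.coprime_two_right.mpr hodd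
  have hq2 : x.val / d ≡ y.val / d [MOD n] := Nat.ModEq.cancel_left_of_coprime hco hq
  have hqx : x.val / d < n := (Nat.div_lt_iff_lt_mul hd).mpr (ZMod.val_lt x)
  have hqy : y.val / d < n := (Nat.div_lt_iff_lt_mul hd).mpr (ZMod.val_lt y)
  have : x.val = y.val := by
    have h1 : x.val / d = y.val / d := by
      have := hq2
      unfold Nat.ModEq at this
      rwa [Nat.mod_eq_of_lt hqx, Nat.mod_eq_of_lt hqy] at this
    rw [← Nat.div_add_mod x.val d, ← Nat.div_add_mod y.val d, h1, hr]
  exact ZMod.val_injective _ this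

lemma cycEdge_ins (d n : ℕ) {V : Type} [DecidableEq V] (f : ZMod (n*d) → V) (i : ℕ) :
    cycEdge (d+1) n f i = insert (f (((i+1)*d : ℕ) : ZMod (n*d)))
      ((range d).image fun t => f ((i*d + t : ℕ) : ZMod (n*d))) := by
  unfold cycEdge
  simp only [Nat.add_sub_cancel]
  rw [Finset.range_add_one, Finset.image_insert]
  have : i*d + d = (i+1)*d := by ring
  rw [this]

lemma cycEdge_mod (d n : ℕ) {V : Type} [DecidableEq V] (f : ZMod (n*d) → V) (a : ℕ) :
    cycEdge (d+1) n f a = cycEdge (d+1) n f (a % n) := by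
  unfold cycEdge
  simp only [Nat.add_sub_cancel]
  congr 1
  funext t
  rw [cdec n d a t]

lemma shifted_form (d n : ℕ) (hd : 0 < d) (hn : 3 ≤ n) {V : Type} [DecidableEq V]
    (f : ZMod (n*d) → V) (hf : Function.Injective f) (i : ℕ) :
    shiftedEdge (d+1) n f i = insert (f (((2*i+2)*d : ℕ) : ZMod (n*d)))
      ((range d).image fun t => f ((2*i*d + t : ℕ) : ZMod (n*d))) := by
  unfold shiftedEdge
  simp only [Nat.add_sub_cancel]
  rw [cycEdge_ins d n f (2*i), Finset.erase_insert]
  intro hmem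
  obtain ⟨t, ht, hft⟩ := Finset.mem_image.mp hmem
  have ht' : t < d := Finset.mem_range.mp ht
  have hv := congrArg ZMod.val (hf hft)
  rw [vmdec (2*i) t (by omega) ht', vmdec0 (2*i+1) (by omega) hd] at hv
  obtain ⟨hq, hr⟩ := duniq hd ht' hd (by simpa using hv)
  have hmeq : (2*i+0 : ℕ) ≡ 2*i+1 [MOD n] := by
    exact (hq : Nat.ModEq n (2*i) (2*i+1))
  have h01 : (0:ℕ) % n = 1 % n := Nat.ModEq.add_left_cancel' (2*i) hmeq
  rw [Nat.zero_mod, Nat.mod_eq_of_lt (by omega)] at h01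
  omega

lemma part1 (d n : ℕ) (hd : 0 < d) (hn : 3 ≤ n) {V : Type} [DecidableEq V]
    (f : ZMod (n*d) → V) (hf : Function.Injective f) (i : ℕ) :
    cycEdge (d+1) n (f ∘ sig n d) i = shiftedEdge (d+1) n f i := by
  rw [cycEdge_ins d n (f ∘ sig n d) i, shifted_form d n hd hn f hf i]
  congr 1
  · show f (sig n d ((i+1)*d : ℕ)) = _
    rw [sig_spec0 (i+1) (by omega) hd]
    have : 2*(i+1)*d = (2*i+2)*d := by ring
    rw [this]
  · apply Finset.image_congr
    intro t ht
    have ht' : t < d := Finset.mem_range.mp (by simpa using ht)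
    show f (sig n d ((i*d + t : ℕ))) = _
    rw [sig_spec i t (by omega) hd ht']

def psi (n d i : ℕ) : ZMod ((n-1)*d) → ZMod (n*d) := fun x =>
  (((if x.val/d = 0 then 2*i else 2*i+1+x.val/d) * d + x.val % d : ℕ) : ZMod (n*d))

lemma psi_spec {n d : ℕ} (i q r : ℕ) (hn : 3 ≤ n) (hd : 0 < d) (hr : r < d) :
    psi n d i ((q*d + r : ℕ) : ZMod ((n-1)*d)) =
      (((if q%(n-1) = 0 then 2*i else 2*i+1+q%(n-1)) * d + r : ℕ) : ZMod (n*d)) := by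
  unfold psi
  rw [vmdec q r (by omega) hr, ddiv _ _ hd hr, dmod _ _ hr]

lemma psi_spec0 {n d : ℕ} (i q : ℕ) (hn : 3 ≤ n) (hd : 0 < d) :
    psi n d i ((q*d : ℕ) : ZMod ((n-1)*d)) =
      (((if q%(n-1) = 0 then 2*i else 2*i+1+q%(n-1)) * d : ℕ) : ZMod (n*d)) := by
  simpa using psi_spec i q 0 hn hd hd

lemma psi_inj {n d : ℕ} (i : ℕ) (hn : 3 ≤ n) (hd : 0 < d) :
    Function.Injective (psi n d i) := by
  haveI : NeZero ((n-1)*d) := ⟨Nat.mul_ne_zero (by omega) (by omega)⟩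
  intro x y hxy
  have hrx : x.val % d < d := Nat.mod_lt _ hd
  have hry : y.val % d < d := Nat.mod_lt _ hd
  have hjx : x.val / d < n-1 := (Nat.div_lt_iff_lt_mul hd).mpr (ZMod.val_lt x)
  have hjy : y.val / d < n-1 := (Nat.div_lt_iff_lt_mul hd).mpr (ZMod.val_lt y)
  have hxy' := congrArg ZMod.val hxy
  unfold psi at hxy'
  rw [vmdec _ _ (by omega : 0 < n) hrx, vmdec _ _ (by omega : 0 < n) hry] at hxy'
  obtain ⟨hq, hr⟩ := duniq hd hrx hry hxy'
  set jx := x.val / d with hjxd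
  set jy := y.val / d with hjyd
  clear_value jx jy
  have hox : (if jx = 0 then 2*i else 2*i+1+jx) = 2*i + (if jx = 0 then 0 else 1+jx) := by
    split <;> omega
  have hoy : (if jy = 0 then 2*i else 2*i+1+jy) = 2*i + (if jy = 0 then 0 else 1+jy) := by
    split <;> omega
  rw [hox, hoy] at hq
  have hcan : ((if jx = 0 then 0 else 1+jx) : ℕ) ≡ (if jy = 0 then 0 else 1+jy) [MOD n] :=
    Nat.ModEq.add_left_cancel' (2*i) hq
  have hlx : (if jx = 0 then 0 else 1+jx) < n := by split <;> omega
  have hly : (if jy = 0 then 0 else 1+jy) < n := by split <;> omega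
  have heq : (if jx = 0 then 0 else 1+jx) = (if jy = 0 then 0 else 1+jy) := by
    have := hcan
    unfold Nat.ModEq at this
    rwa [Nat.mod_eq_of_lt hlx, Nat.mod_eq_of_lt hly] at this
  have hj : jx = jy := by
    by_cases h1 : jx = 0 <;> by_cases h2 : jy = 0 <;>
      simp only [h1, h2, if_true, if_false] at heq <;> omega
  have : x.val = y.val := by
    rw [← Nat.div_add_mod x.val d, ← Nat.div_add_mod y.val d, ← hjxd, ← hjyd, hj, hr]
  exact ZMod.val_injective _ this

lemma part2_edge0 (d n i : ℕ) (hd : 0 < d) (hn : 3 ≤ n) {V : Type} [DecidableEq V]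
    (f : ZMod (n*d) → V) (hf : Function.Injective f) :
    cycEdge (d+1) (n-1) (f ∘ psi n d i) 0 = shiftedEdge (d+1) n f i := by
  rw [cycEdge_ins d (n-1) (f ∘ psi n d i) 0, shifted_form d n hd hn f hf i]
  congr 1
  · show f (psi n d i (((0+1)*d : ℕ) : ZMod ((n-1)*d))) = _
    have h1 := psi_spec0 i 1 hn hd
    rw [Nat.mod_eq_of_lt (by omega), if_neg (by omega)] at h1
    rw [show ((0+1)*d : ℕ) = 1*d from by norm_num, h1,
      show 2*i+1+1 = 2*i+2 from rfl]
  · apply Finset.image_congr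
    intro t ht
    have ht' : t < d := Finset.mem_range.mp (by simpa using ht)
    show f (psi n d i ((0*d + t : ℕ) : ZMod ((n-1)*d))) = _
    have h := psi_spec i 0 t hn hd ht'
    rw [Nat.zero_mod, if_pos rfl] at h
    rw [h]

lemma part2_edgej (d n i j : ℕ) (hd : 0 < d) (hn : 3 ≤ n) (hj1 : 1 ≤ j) (hj2 : j < n-1)
    {V : Type} [DecidableEq V] (f : ZMod (n*d) → V) :
    cycEdge (d+1) (n-1) (f ∘ psi n d i) j = cycEdge (d+1) n f (2*i+1+j) := by
  rw [cycEdge_ins d (n-1) (f ∘ psi n d i) j, cycEdge_ins d n f (2*i+1+j)]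
  congr 1
  · show f (psi n d i (((j+1)*d : ℕ) : ZMod ((n-1)*d))) = _
    have h := psi_spec0 i (j+1) hn hd
    by_cases hcase : j+1 = n-1
    · rw [show (j+1)%(n-1) = 0 from by rw [hcase, Nat.mod_self], if_pos rfl] at h
      rw [h, show 2*i+1+j+1 = 2*i+n from by omega, cdec0 n d (2*i+n), cdec0 n d (2*i),
        Nat.add_mod_right]
    · rw [Nat.mod_eq_of_lt (by omega), if_neg (by omega)] at h
      rw [h, show 2*i+1+(j+1) = 2*i+1+j+1 from by omega]
  · apply Finset.image_congr
    intro t ht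
    have ht' : t < d := Finset.mem_range.mp (by simpa using ht)
    show f (psi n d i ((j*d + t : ℕ) : ZMod ((n-1)*d))) = _
    have h := psi_spec i j t hn hd ht'
    rw [Nat.mod_eq_of_lt hj2, if_neg (by omega)] at h
    rw [h]


/-- For a red loose cycle `C = e₁…eₙ` (`n` odd), the shifted edges `fᵢ` form a
loose cycle `C^k_n`, and if there is no red `C^k_{n-1}` then all the `fᵢ` are blue, giving a
blue `C^k_n`. -/
theorem shifted_edges_form_blue_cycle (n k N : ℕ) (hn : 3 ≤ n) (hodd : Odd n) (hk : 3 ≤ k)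
    (hN : (k - 1) * n ≤ N) (c : Finset (Fin N) → Bool)
    (f : ZMod (n * (k - 1)) → Fin N)
    (hf : IsLooseCycle k n (fun e => c e = true) f) :
    (∃ h : ZMod (n * (k - 1)) → Fin N, Function.Injective h ∧
        ∀ i < n, cycEdge k n h i = shiftedEdge k n f i) ∧
    (¬ HasLooseCycle k (n - 1) (fun e => c e = true) →
        (∀ i < n, c (shiftedEdge k n f i) = false) ∧
        HasLooseCycle k n (fun e => c e = false)) := by
  obtain ⟨d, rfl⟩ : ∃ d, k = d + 1 := ⟨k - 1, by omega⟩
  have hd : 0 < d := by omega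
  obtain ⟨hfinj, hfred⟩ := hf
  have hpart1 : ∀ i, cycEdge (d+1) n (f ∘ sig n d) i = shiftedEdge (d+1) n f i :=
    part1 d n hd hn f hfinj
  have hsiginj : Function.Injective (f ∘ sig n d) :=
    hfinj.comp (sig_inj (by omega) hd hodd)
  constructor
  · exact ⟨f ∘ sig n d, hsiginj, fun i _ => hpart1 i⟩
  · intro hnored
    have hblue : ∀ i < n, c (shiftedEdge (d+1) n f i) = false := by
      intro i hi
      by_contra hcol
      have hred : c (shiftedEdge (d+1) n f i) = true := by
        simp only [Bool.not_eq_false] at hcol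
        exact hcol
      apply hnored
      refine ⟨f ∘ psi n d i, hfinj.comp (psi_inj i hn hd), ?_⟩
      intro j hj
      rcases Nat.eq_zero_or_pos j with rfl | hj1
      · show c _ = true
        rw [part2_edge0 d n i hd hn f hfinj]
        exact hred
      · show c _ = true
        rw [part2_edgej d n i j hd hn hj1 (by omega) f, cycEdge_mod d n f (2*i+1+j)]
        exact hfred ((2*i+1+j) % n) (Nat.mod_lt _ (by omega))
    refine ⟨hblue, f ∘ sig n d, hsiginj, fun i hi => ?_⟩
    show c _ = false
    rw [hpart1 i]
    exact hblue i hi
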